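/- arXiv:1510.02596 — 3 statements merged into one kernel-verified Lean document; each statement's English description precedes it below -/
import Mathlib

section
/- Suppose V is finite-dimensional over k and B is a nondegenerate contravariant symmetric k-bilinear form on V. Then the orthogonal of the socle of V equals the radical of V: (soc V)^⊥ = rad V, where soc V is the sum of all simple A-submodules of V and rad V is the intersection of all maximal A-submodules of V. -/
/-- The orthogonal of an `A`-submodule with respect to a contravariant bilinear form
is again an `A`-submodule. -/
def orthA {k A V : Type*} [Field k] [Ring A] [Algebra k A]
    [AddCommGroup V] [Module k V] [Module A V] [IsScalarTower k A V]
    (τ : A → A) (hτinv : ∀ a : A, τ (τ a) = a)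
    (B : LinearMap.BilinForm k V)
    (hB : ∀ (a : A) (v w : V), B (a • v) w = B v (τ a • w))
    (W : Submodule A V) : Submodule A V where
  carrier := B.orthogonal (W.restrictScalars k)
  add_mem' hx hy := (B.orthogonal (W.restrictScalars k)).add_mem hx hy
  zero_mem' := (B.orthogonal (W.restrictScalars k)).zero_mem
  smul_mem' a v hv := by
    intro u hu
    have h1 : B (τ a • u) v = B u (τ (τ a) • v) := hB (τ a) u v
    rw [hτinv] at h1
    have h2 : (B u) (a • v) = 0 := by
      rw [← h1]
      exact hv (τ a • u) (W.smul_mem (τ a) hu)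
    exact h2

theorem restrictScalars_orthA {k A V : Type*} [Field k] [Ring A] [Algebra k A]
    [AddCommGroup V] [Module k V] [Module A V] [IsScalarTower k A V]
    (τ : A → A) (hτinv : ∀ a : A, τ (τ a) = a)
    (B : LinearMap.BilinForm k V)
    (hB : ∀ (a : A) (v w : V), B (a • v) w = B v (τ a • w))
    (W : Submodule A V) :
    (orthA τ hτinv B hB W).restrictScalars k = B.orthogonal (W.restrictScalars k) := rfl

/-- Let `V` be finite-dimensional over `k` with a nondegenerate contravariant
symmetric `k`-bilinear form `B`.  Then the orthogonal of the socle of `V` (the sum of all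
simple `A`-submodules) equals the radical of `V` (the intersection of all maximal proper
`A`-submodules): `(soc V)^⊥ = rad V`. -/
theorem orthogonal_socle_eq_radical
    (k A V : Type*) [Field k] [Ring A] [Algebra k A]
    [AddCommGroup V] [Module k V] [Module A V] [IsScalarTower k A V]
    [FiniteDimensional k V]
    (τ : A → A)
    (hτadd : ∀ a b : A, τ (a + b) = τ a + τ b)
    (hτmul : ∀ a b : A, τ (a * b) = τ b * τ a)
    (hτalg : ∀ c : k, τ (algebraMap k A c) = algebraMap k A c)
    (hτinv : ∀ a : A, τ (τ a) = a)
    (B : LinearMap.BilinForm k V)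
    (hB : ∀ (a : A) (v w : V), B (a • v) w = B v (τ a • w))
    (hBnd : B.Nondegenerate)
    (hBsymm : ∀ v w : V, B v w = B w v) :
    B.orthogonal
        ((sSup {W : Submodule A V | IsSimpleModule A ↥W}).restrictScalars k) =
      (sInf {W : Submodule A V | IsCoatom W}).restrictScalars k := by
  classical
  have hrefl : B.IsRefl := fun v w h => by rw [hBsymm]; exact h
  set Φ : Submodule A V → Submodule A V := orthA τ hτinv B hB with hΦ
  have hres : ∀ W : Submodule A V,
      (Φ W).restrictScalars k = B.orthogonal (W.restrictScalars k) := fun W => rfl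
  have hanti : ∀ {W₁ W₂ : Submodule A V}, W₁ ≤ W₂ → Φ W₂ ≤ Φ W₁ := by
    intro W₁ W₂ h x hx
    have : x ∈ B.orthogonal (W₂.restrictScalars k) := hx
    exact B.orthogonal_le (fun y hy => h hy) this
  have hinv : ∀ W : Submodule A V, Φ (Φ W) = W := by
    intro W
    apply Submodule.restrictScalars_injective k A V
    rw [hres, hres, B.orthogonal_orthogonal hBnd hrefl]
  have htop : Φ ⊤ = ⊥ := by
    apply Submodule.restrictScalars_injective k A V
    rw [hres, Submodule.restrictScalars_top, LinearMap.BilinForm.orthogonal_top_eq_bot hBnd,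
      Submodule.restrictScalars_bot]
  have hbot : Φ ⊥ = ⊤ := by
    apply Submodule.restrictScalars_injective k A V
    rw [hres, Submodule.restrictScalars_bot, B.orthogonal_bot,
      Submodule.restrictScalars_top]
  have hΦinj : Function.Injective Φ := fun W₁ W₂ h => by
    have := congrArg Φ h; rwa [hinv, hinv] at this
  have hatom : ∀ {W : Submodule A V}, IsAtom W → IsCoatom (Φ W) := by
    intro W hW
    constructor
    · intro h
      have : W = ⊥ := by rw [← hinv W, h, htop]
      exact hW.1 this
    · intro X hX
      have hle : Φ X ≤ W := by
        have := hanti hX.le; rwa [hinv] at this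
      have hne : Φ X ≠ W := by
        intro h
        have : X = Φ W := by rw [← hinv X, h]
        exact hX.ne this.symm
      have : Φ X = ⊥ := hW.2 _ (lt_of_le_of_ne hle hne)
      rw [← hinv X, this, hbot]
  have hcoatom : ∀ {W : Submodule A V}, IsCoatom W → IsAtom (Φ W) := by
    intro W hW
    constructor
    · intro h
      have : W = ⊤ := by rw [← hinv W, h, hbot]
      exact hW.1 this
    · intro X hX
      have hle : W ≤ Φ X := by
        have := hanti hX.le; rwa [hinv] at this
      have hne : W ≠ Φ X := by
        intro h
        have : X = Φ W := by rw [← hinv X, ← h]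
        exact hX.ne this
      have : Φ X = ⊤ := hW.2 _ (lt_of_le_of_ne hle hne)
      rw [← hinv X, this, htop]
  have himg : Φ '' {W : Submodule A V | IsSimpleModule A ↥W}
      = {W : Submodule A V | IsCoatom W} := by
    ext W
    constructor
    · rintro ⟨U, hU, rfl⟩
      exact hatom (isSimpleModule_iff_isAtom.mp hU)
    · intro hW
      refine ⟨Φ W, ?_, hinv W⟩
      exact isSimpleModule_iff_isAtom.mpr (hcoatom hW)
  set S : Set (Submodule A V) := {W : Submodule A V | IsSimpleModule A ↥W} with hS
  have hsup : Φ (sSup S) = sInf {W : Submodule A V | IsCoatom W} := by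
    rw [← himg]
    apply le_antisymm
    · refine le_sInf ?_
      rintro X ⟨U, hU, rfl⟩
      exact hanti (le_sSup hU)
    · have h1 : sSup S ≤ Φ (sInf (Φ '' S)) := by
        refine sSup_le fun U hU => ?_
        have := hanti (sInf_le (Set.mem_image_of_mem Φ hU))
        rwa [hinv] at this
      have := hanti h1
      rwa [hinv] at this
  calc B.orthogonal ((sSup S).restrictScalars k)
      = (Φ (sSup S)).restrictScalars k := (hres _).symm
    _ = (sInf {W : Submodule A V | IsCoatom W}).restrictScalars k := by rw [hsup]
end

section
/- Suppose V is finite-dimensional over k, B is a nondegenerate symmetric contravariant k-bilinear form on V, and V is not semisimple as an A-module. Then V contains a nonzero totally isotropic A-submodule. -/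
/-- Let `V` be finite-dimensional over `k` with a nondegenerate symmetric
contravariant `k`-bilinear form `B`.  If `V` is not semisimple as an `A`-module, then `V`
contains a nonzero totally isotropic `A`-submodule. -/
theorem exists_nonzero_isotropic_of_not_semisimple
    (k A V : Type*) [Field k] [Ring A] [Algebra k A]
    [AddCommGroup V] [Module k V] [Module A V] [IsScalarTower k A V]
    [FiniteDimensional k V]
    (τ : A → A)
    (hτadd : ∀ a b : A, τ (a + b) = τ a + τ b)
    (hτmul : ∀ a b : A, τ (a * b) = τ b * τ a)
    (hτalg : ∀ c : k, τ (algebraMap k A c) = algebraMap k A c)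
    (hτinv : ∀ a : A, τ (τ a) = a)
    (B : LinearMap.BilinForm k V)
    (hB : ∀ (a : A) (v w : V), B (a • v) w = B v (τ a • w))
    (hBnd : B.Nondegenerate)
    (hBsymm : ∀ v w : V, B v w = B w v)
    (hnss : ¬ IsSemisimpleModule A V) :
    ∃ U : Submodule A V, U ≠ ⊥ ∧
      U.restrictScalars k ≤ B.orthogonal (U.restrictScalars k) := by
  by_contra hiso
  push_neg at hiso
  apply hnss
  have hrefl : B.IsRefl := fun x y h => by rw [hBsymm]; exact h
  rw [isSemisimpleModule_iff]
  constructor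
  intro U
  -- the orthogonal complement as an A-submodule
  refine ⟨{ carrier := B.orthogonal (U.restrictScalars k)
            add_mem' := fun hx hy => Submodule.add_mem _ hx hy
            zero_mem' := Submodule.zero_mem _
            smul_mem' := ?_ }, ?_⟩
  · intro a v hv u hu
    have h1 : B (τ a • u) v = B u (a • v) := by
      have := hB (τ a) u v
      rwa [hτinv] at this
    have h2 : B (τ a • u) v = 0 := hv (τ a • u) (U.smul_mem (τ a) hu)
    show B u (a • v) = 0; rw [← h1]; exact h2
  · set W : Submodule A V :=
      { carrier := B.orthogonal (U.restrictScalars k)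
        add_mem' := fun hx hy => Submodule.add_mem _ hx hy
        zero_mem' := Submodule.zero_mem _
        smul_mem' := by
          intro a v hv u hu
          have h1 : B (τ a • u) v = B u (a • v) := by
            have := hB (τ a) u v
            rwa [hτinv] at this
          have h2 : B (τ a • u) v = 0 := hv (τ a • u) (U.smul_mem (τ a) hu)
          show B u (a • v) = 0; rw [← h1]; exact h2 } with hW
    have hWr : W.restrictScalars k = B.orthogonal (U.restrictScalars k) := by
      ext x; rfl
    -- the intersection U ⊓ W is totally isotropic, hence ⊥
    have hinf : U ⊓ W = ⊥ := by
      by_contra hne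
      refine hiso (U ⊓ W) hne ?_
      intro v hv n hn
      have hvW : v ∈ W := (Submodule.mem_inf.mp hv).2
      have hnU : (n : V) ∈ U := (Submodule.mem_inf.mp hn).1
      exact hvW n hnU
    have hdisj : Disjoint (U.restrictScalars k) (B.orthogonal (U.restrictScalars k)) := by
      rw [disjoint_iff, ← hWr]
      have : (Submodule.restrictScalars k (U ⊓ W) : Submodule k V)
          = U.restrictScalars k ⊓ W.restrictScalars k := by ext x; simp
      rw [← this, hinf, Submodule.restrictScalars_bot]
    have hcompl : IsCompl (U.restrictScalars k) (B.orthogonal (U.restrictScalars k)) :=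
      (LinearMap.BilinForm.isCompl_orthogonal_iff_disjoint hrefl).mpr hdisj
    constructor
    · rw [disjoint_iff, ← Submodule.restrictScalars_eq_bot_iff (S := k)]
      have : (Submodule.restrictScalars k (U ⊓ W) : Submodule k V)
          = U.restrictScalars k ⊓ W.restrictScalars k := by ext x; simp
      rw [this, hWr]
      exact disjoint_iff.mp hcompl.disjoint
    · rw [codisjoint_iff, ← Submodule.restrictScalars_eq_top_iff (S := k)]
      refine top_unique ?_
      calc (⊤ : Submodule k V) = U.restrictScalars k ⊔ B.orthogonal (U.restrictScalars k) :=
            (codisjoint_iff.mp hcompl.codisjoint).symm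
        _ ≤ Submodule.restrictScalars k (U ⊔ W) := by
            rw [← hWr]
            exact sup_le
              ((Submodule.restrictScalarsEmbedding k A V).monotone le_sup_left)
              ((Submodule.restrictScalarsEmbedding k A V).monotone le_sup_right)
end

section
/- Suppose V is finite-dimensional over k and B is a nondegenerate symmetric contravariant k-bilinear form on V. If U is an A-submodule of V that is maximal (with respect to inclusion) among totally isotropic A-submodules of V, then the quotient A-module U^⊥/U is semisimple. -/
/-- Let `V` be finite-dimensional over `k` with a nondegenerate symmetric
contravariant `k`-bilinear form `B`.  If `U` is an `A`-submodule of `V` that is maximal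
(w.r.t. inclusion) among totally isotropic `A`-submodules of `V`, then `U^⊥` is an
`A`-submodule and the quotient `A`-module `U^⊥/U` is semisimple. -/
theorem maximal_isotropic_quotient_semisimple
    (k A V : Type*) [Field k] [Ring A] [Algebra k A]
    [AddCommGroup V] [Module k V] [Module A V] [IsScalarTower k A V]
    [FiniteDimensional k V]
    (τ : A → A)
    (hτadd : ∀ a b : A, τ (a + b) = τ a + τ b)
    (hτmul : ∀ a b : A, τ (a * b) = τ b * τ a)
    (hτalg : ∀ c : k, τ (algebraMap k A c) = algebraMap k A c)
    (hτinv : ∀ a : A, τ (τ a) = a)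
    (B : LinearMap.BilinForm k V)
    (hB : ∀ (a : A) (v w : V), B (a • v) w = B v (τ a • w))
    (hBnd : B.Nondegenerate)
    (hBsymm : ∀ v w : V, B v w = B w v)
    (U : Submodule A V)
    (hUiso : U.restrictScalars k ≤ B.orthogonal (U.restrictScalars k))
    (hUmax : ∀ W : Submodule A V,
      W.restrictScalars k ≤ B.orthogonal (W.restrictScalars k) → U ≤ W → W = U) :
    ∃ Uperp : Submodule A V,
      (Uperp : Set V) = {v : V | ∀ u ∈ U, B u v = 0} ∧
        IsSemisimpleModule A (↥Uperp ⧸ U.comap Uperp.subtype) := by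
  classical
  have hrefl : B.IsRefl := fun v w h => by rw [hBsymm]; exact h
  -- the orthogonal of an `A`-submodule is an `A`-submodule
  have hstab : ∀ (W : Submodule A V) (a : A) (v : V),
      v ∈ B.orthogonal (W.restrictScalars k) → a • v ∈ B.orthogonal (W.restrictScalars k) := by
    intro W a v hv w hw
    show B w (a • v) = 0
    rw [hBsymm, hB, hBsymm]
    exact hv _ (W.smul_mem (τ a) hw)
  let orthoA : Submodule A V → Submodule A V := fun W =>
    { carrier := B.orthogonal (W.restrictScalars k)
      add_mem' := fun h1 h2 => Submodule.add_mem _ h1 h2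
      zero_mem' := Submodule.zero_mem _
      smul_mem' := fun a v hv => hstab W a v hv }
  have horthoA_mem : ∀ (W : Submodule A V) (v : V),
      v ∈ orthoA W ↔ ∀ w ∈ W, B w v = 0 := fun W v => Iff.rfl
  have horthoA_res : ∀ W : Submodule A V,
      (orthoA W).restrictScalars k = B.orthogonal (W.restrictScalars k) := fun W => rfl
  set Uperp : Submodule A V := orthoA U with hUperp_def
  refine ⟨Uperp, ?_, ?_⟩
  · ext v
    exact horthoA_mem U v
  -- `U ≤ Uperp`
  have hUle : U ≤ Uperp := fun u hu => hUiso hu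
  -- finrank of orthogonal
  have hfr : ∀ W : Submodule A V,
      Module.finrank k (B.orthogonal (W.restrictScalars k)) =
        Module.finrank k V - Module.finrank k (W.restrictScalars k) := by
    intro W
    exact LinearMap.BilinForm.finrank_orthogonal hBnd _
  set U' : Submodule A ↥Uperp := U.comap Uperp.subtype with hU'
  refine (isSemisimpleModule_iff A _).2 ⟨?_⟩
  intro q
  -- preimage of q in Uperp, then its image in V
  set W' : Submodule A ↥Uperp := q.comap U'.mkQ with hW'
  set W : Submodule A V := W'.map Uperp.subtype with hW
  have hWle : W ≤ Uperp := Submodule.map_subtype_le _ _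
  have hUW : U ≤ W := by
    intro u hu
    refine ⟨⟨u, hUle hu⟩, ?_, rfl⟩
    show U'.mkQ ⟨u, hUle hu⟩ ∈ q
    have : (⟨u, hUle hu⟩ : ↥Uperp) ∈ U' := hu
    rw [show U'.mkQ ⟨u, hUle hu⟩ = 0 from (Submodule.Quotient.mk_eq_zero _).2 this]
    exact q.zero_mem
  set Wo : Submodule A V := orthoA W with hWo
  -- U ≤ Wo
  have hUWo : U ≤ Wo := by
    intro u hu
    intro w hw
    show B w u = 0
    rw [hBsymm]
    exact hWle hw u hu
  -- W ⊓ Wo is totally isotropic, so equals U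
  have hWinf : W ⊓ Wo = U := by
    apply hUmax
    · intro v hv w hw
      show B w v = 0
      exact hv.2 w hw.1
    · exact le_inf hUW hUWo
  -- Wo ≤ Uperp
  have hWoUperp : Wo ≤ Uperp := by
    intro v hv u hu
    exact hv u (hUW hu)
  -- dimension count: W ⊔ Wo = Uperp as k-subspaces
  have hsupk : W.restrictScalars k ⊔ Wo.restrictScalars k = Uperp.restrictScalars k := by
    have hle : W.restrictScalars k ⊔ Wo.restrictScalars k ≤ Uperp.restrictScalars k :=
      sup_le (fun x hx => hWle hx) (fun x hx => hWoUperp hx)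
    have hinfk : W.restrictScalars k ⊓ Wo.restrictScalars k = U.restrictScalars k := by
      ext x; exact ⟨fun h => (hWinf ▸ (Submodule.mem_inf.2 h) : x ∈ U),
        fun h => Submodule.mem_inf.1 (hWinf ▸ h : x ∈ W ⊓ Wo)⟩
    apply Submodule.eq_of_le_of_finrank_eq hle
    have h1 := Submodule.finrank_sup_add_finrank_inf_eq
      (W.restrictScalars k) (Wo.restrictScalars k)
    rw [hinfk] at h1
    have h2 : Module.finrank k (W.restrictScalars k) +
        Module.finrank k (Wo.restrictScalars k) = Module.finrank k V := by
      have := hfr W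
      have hle' : Module.finrank k (W.restrictScalars k) ≤ Module.finrank k V :=
        Submodule.finrank_le _
      have h4 : Module.finrank k (Wo.restrictScalars k) =
          Module.finrank k V - Module.finrank k (W.restrictScalars k) := hfr W
      omega
    have h3 : Module.finrank k (Uperp.restrictScalars k) =
        Module.finrank k V - Module.finrank k (U.restrictScalars k) := hfr U
    have hleU : Module.finrank k (U.restrictScalars k) ≤ Module.finrank k V :=
      Submodule.finrank_le _
    have hleUW : Module.finrank k (U.restrictScalars k) ≤
        Module.finrank k ↥(W.restrictScalars k ⊔ Wo.restrictScalars k) + 0 := by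
      simpa using Submodule.finrank_mono (hinfk ▸ inf_le_sup :
        U.restrictScalars k ≤ W.restrictScalars k ⊔ Wo.restrictScalars k)
    omega
  -- the complement
  refine ⟨(Wo.comap Uperp.subtype).map U'.mkQ, ?_, ?_⟩
  · -- disjoint
    rw [disjoint_iff]
    rw [eq_bot_iff]
    rintro x ⟨hxq, y, hy, rfl⟩
    have hyW' : y ∈ W' := hxq
    have hyU : (y : V) ∈ U := by
      rw [← hWinf]
      exact ⟨⟨y, hyW', rfl⟩, hy⟩
    have : y ∈ U' := hyU
    simpa using (Submodule.Quotient.mk_eq_zero _).2 this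
  · -- codisjoint
    rw [codisjoint_iff]
    rw [eq_top_iff]
    rintro x -
    obtain ⟨y, rfl⟩ := U'.mkQ_surjective x
    have hyv : (y : V) ∈ W.restrictScalars k ⊔ Wo.restrictScalars k := by
      rw [hsupk]; exact y.2
    obtain ⟨w, hw, z, hz, hwz⟩ := Submodule.mem_sup.1 hyv
    obtain ⟨w', hw', hw'v⟩ := (hw : w ∈ W)
    have hzUperp : z ∈ Uperp := hWoUperp hz
    have hysplit : y = w' + ⟨z, hzUperp⟩ := by
      apply Subtype.ext
      simp only [Submodule.coe_add]
      rw [← hwz, ← hw'v]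
      rfl
    rw [hysplit, map_add]
    exact Submodule.add_mem_sup (Submodule.mem_comap.1 hw') ⟨⟨z, hzUperp⟩, hz, rfl⟩
end
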